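/- Outer independence implies inner independence: if Y_A ⫫_o Y_C, then for every measurable product set S_A × S_C ⊂ Ω with P(Y ∈ S_A × S_C) > 0, Y_A and Y_C are conditionally independent given the event {Y ∈ S_A × S_C}. -/

import Mathlib

open MeasureTheory ProbabilityTheory Set
open scoped ENNReal

noncomputable section

/-- `X ⫫ Y` conditionally on the event `E`. -/
def condIndepOn {Ω₀ : Type*} [MeasurableSpace Ω₀] (μ : Measure Ω₀) (E : Set Ω₀)
    {α β : Type*} [MeasurableSpace α] [MeasurableSpace β]
    (X : Ω₀ → α) (Y : Ω₀ → β) : Prop :=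
  ∀ (HA : Set α) (HC : Set β), MeasurableSet HA → MeasurableSet HC →
    μ[|E] (X ⁻¹' HA ∩ Y ⁻¹' HC) = μ[|E] (X ⁻¹' HA) * μ[|E] (Y ⁻¹' HC)

/-- outer independence of `Y_A` and `Y_C` relative to `Om`. -/
def OuterIndep {Ω₀ : Type} [MeasurableSpace Ω₀] (μ : Measure Ω₀)
    {α β : Type} [MeasurableSpace α] [MeasurableSpace β]
    (YA : Ω₀ → α) (YC : Ω₀ → β) (Om : Set (α × β)) : Prop :=
  ∃ (Ω' : Type) (_ : MeasurableSpace Ω') (P : Measure Ω') (WA : Ω' → α) (WC : Ω' → β)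
    (LA : Set α) (LC : Set β),
    IsProbabilityMeasure P ∧ Measurable WA ∧ Measurable WC ∧
    Om ⊆ LA ×ˢ LC ∧
    P ((fun ω => (WA ω, WC ω)) ⁻¹' (LA ×ˢ LC)) = 1 ∧
    IndepFun WA WC P ∧
    (P[|(fun ω => (WA ω, WC ω)) ⁻¹' Om]).map (fun ω => (WA ω, WC ω)) =
      μ.map (fun ω => (YA ω, YC ω))

/-- inner independence of `Y_A` and `Y_C` relative to `Om`: conditional independence given
`{Y ∈ S_A × S_C}` for every positive-probability measurable product subset of `Om`. -/
def InnerIndep {Ω₀ : Type} [MeasurableSpace Ω₀] (μ : Measure Ω₀)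
    {α β : Type} [MeasurableSpace α] [MeasurableSpace β]
    (YA : Ω₀ → α) (YC : Ω₀ → β) (Om : Set (α × β)) : Prop :=
  ∀ (SA : Set α) (SC : Set β), MeasurableSet SA → MeasurableSet SC →
    SA ×ˢ SC ⊆ Om →
    0 < μ ((fun ω => (YA ω, YC ω)) ⁻¹' (SA ×ˢ SC)) →
    condIndepOn μ ((fun ω => (YA ω, YC ω)) ⁻¹' (SA ×ˢ SC)) YA YC

/-- outer independence implies inner independence. -/
theorem stmt1 {Ω₀ ιA ιC : Type} [MeasurableSpace Ω₀]
    (μ : Measure Ω₀) [IsProbabilityMeasure μ]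
    (YA : Ω₀ → ιA → ℝ) (YC : Ω₀ → ιC → ℝ)
    (hA : Measurable YA) (hC : Measurable YC)
    (Om : Set ((ιA → ℝ) × (ιC → ℝ)))
    (hsupp : ∀ᵐ ω ∂μ, (YA ω, YC ω) ∈ Om)
    (houter : OuterIndep μ YA YC Om) :
    InnerIndep μ YA YC Om := by
  intro SA SC hSA hSC hsub hpos
  obtain ⟨Ω', mΩ', P, WA, WC, LA, LC, hPprob, hWA, hWC, hLALC, hL1, hindep, hmap⟩ := houter
  set W : Ω' → (ιA → ℝ) × (ιC → ℝ) := fun ω => (WA ω, WC ω) with hWdef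
  set Y : Ω₀ → (ιA → ℝ) × (ιC → ℝ) := fun ω => (YA ω, YC ω) with hYdef
  have hW : Measurable W := hWA.prodMk hWC
  have hY : Measurable Y := hA.prodMk hC
  -- key transfer formula
  have key : ∀ T : Set ((ιA → ℝ) × (ιC → ℝ)), MeasurableSet T → T ⊆ Om →
      μ (Y ⁻¹' T) = (P (W ⁻¹' Om))⁻¹ * P (W ⁻¹' T) := by
    intro T hT hTOm
    have h1 : μ (Y ⁻¹' T) = (μ.map Y) T := (Measure.map_apply hY hT).symm
    rw [h1, ← hmap, Measure.map_apply hW hT, ProbabilityTheory.cond,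
      Measure.smul_apply, smul_eq_mul, Measure.restrict_apply (hW hT),
      Set.inter_eq_self_of_subset_left (Set.preimage_mono hTOm)]
  have hind : ∀ S : Set (ιA → ℝ), ∀ T : Set (ιC → ℝ), MeasurableSet S → MeasurableSet T →
      P (W ⁻¹' (S ×ˢ T)) = P (WA ⁻¹' S) * P (WC ⁻¹' T) := by
    intro S T hS hT
    rw [hWdef, Set.mk_preimage_prod]
    exact hindep.measure_inter_preimage_eq_mul S T hS hT
  set x := P (W ⁻¹' Om) with hxdef
  set a := P (WA ⁻¹' SA) with hadef
  set c := P (WC ⁻¹' SC) with hcdef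
  have hE : μ (Y ⁻¹' (SA ×ˢ SC)) = x⁻¹ * (a * c) := by
    rw [key _ (hSA.prod hSC) hsub, hind _ _ hSA hSC]
  rw [hE] at hpos
  -- positivity and finiteness facts
  have hac_ne : a * c ≠ 0 := by
    intro h; rw [h, mul_zero] at hpos; exact lt_irrefl 0 hpos
  have hacx : a * c ≤ x := by
    rw [← hind _ _ hSA hSC]
    exact measure_mono (Set.preimage_mono hsub)
  have hx0 : x ≠ 0 := fun h => hac_ne (le_antisymm (h ▸ hacx) zero_le)
  have hxinv_top : x⁻¹ ≠ ∞ := ENNReal.inv_ne_top.mpr hx0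
  have ha_top : a ≠ ∞ := measure_ne_top P _
  have hc_top : c ≠ ∞ := measure_ne_top P _
  have hden_ne : x⁻¹ * (a * c) ≠ 0 := ne_of_gt hpos
  have hden_top : x⁻¹ * (a * c) ≠ ∞ :=
    ENNReal.mul_ne_top hxinv_top (ENNReal.mul_ne_top ha_top hc_top)
  have hcancel : (x⁻¹ * (a * c))⁻¹ * (x⁻¹ * (a * c)) = 1 :=
    ENNReal.inv_mul_cancel hden_ne hden_top
  -- main computation
  intro HA HC hHA hHC
  have hEset : MeasurableSet (Y ⁻¹' (SA ×ˢ SC)) := hY (hSA.prod hSC)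
  have e1 : Y ⁻¹' (SA ×ˢ SC) ∩ (YA ⁻¹' HA ∩ YC ⁻¹' HC)
      = Y ⁻¹' ((SA ∩ HA) ×ˢ (SC ∩ HC)) := by
    ext ω
    simp only [hYdef, Set.mem_inter_iff, Set.mem_preimage, Set.mem_prod]
    tauto
  have e2 : Y ⁻¹' (SA ×ˢ SC) ∩ YA ⁻¹' HA = Y ⁻¹' ((SA ∩ HA) ×ˢ SC) := by
    ext ω
    simp only [hYdef, Set.mem_inter_iff, Set.mem_preimage, Set.mem_prod]
    tauto
  have e3 : Y ⁻¹' (SA ×ˢ SC) ∩ YC ⁻¹' HC = Y ⁻¹' (SA ×ˢ (SC ∩ HC)) := by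
    ext ω
    simp only [hYdef, Set.mem_inter_iff, Set.mem_preimage, Set.mem_prod]
    tauto
  set a' := P (WA ⁻¹' (SA ∩ HA)) with ha'def
  set c' := P (WC ⁻¹' (SC ∩ HC)) with hc'def
  have v1 : μ (Y ⁻¹' (SA ×ˢ SC) ∩ (YA ⁻¹' HA ∩ YC ⁻¹' HC)) = x⁻¹ * (a' * c') := by
    rw [e1, key _ ((hSA.inter hHA).prod (hSC.inter hHC))
      ((Set.prod_mono Set.inter_subset_left Set.inter_subset_left).trans hsub),
      hind _ _ (hSA.inter hHA) (hSC.inter hHC)]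
  have v2 : μ (Y ⁻¹' (SA ×ˢ SC) ∩ YA ⁻¹' HA) = x⁻¹ * (a' * c) := by
    rw [e2, key _ ((hSA.inter hHA).prod hSC)
      ((Set.prod_mono Set.inter_subset_left subset_rfl).trans hsub),
      hind _ _ (hSA.inter hHA) hSC]
  have v3 : μ (Y ⁻¹' (SA ×ˢ SC) ∩ YC ⁻¹' HC) = x⁻¹ * (a * c') := by
    rw [e3, key _ (hSA.prod (hSC.inter hHC))
      ((Set.prod_mono subset_rfl Set.inter_subset_left).trans hsub),
      hind _ _ hSA (hSC.inter hHC)]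
  show μ[|Y ⁻¹' (SA ×ˢ SC)] (YA ⁻¹' HA ∩ YC ⁻¹' HC)
      = μ[|Y ⁻¹' (SA ×ˢ SC)] (YA ⁻¹' HA) * μ[|Y ⁻¹' (SA ×ˢ SC)] (YC ⁻¹' HC)
  rw [cond_apply hEset, cond_apply hEset, cond_apply hEset, v1, v2, v3, hE]
  have hrhs : ((x⁻¹ * (a * c))⁻¹ * (x⁻¹ * (a' * c))) * ((x⁻¹ * (a * c))⁻¹ * (x⁻¹ * (a * c')))
      = (x⁻¹ * (a * c))⁻¹ * (x⁻¹ * (a' * c')) := by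
    rw [show ((x⁻¹ * (a * c))⁻¹ * (x⁻¹ * (a' * c))) * ((x⁻¹ * (a * c))⁻¹ * (x⁻¹ * (a * c')))
        = ((x⁻¹ * (a * c))⁻¹ * (x⁻¹ * (a' * c'))) * ((x⁻¹ * (a * c))⁻¹ * (x⁻¹ * (a * c)))
      from by ring, hcancel, mul_one]
  rw [hrhs]

end
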